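/- For every even positive integer n and every positive integer m, 2 · Σ_{l=0}^{n-1} (-1)^l l^m = - Σ_{l=0}^{m-1} C(m,l) E_l n^{m-l}, an identity of rational numbers. -/

import Mathlib

/-- The Euler numbers `E₀ = 1`, `∑_{k=0}^{n} C(n,k) Eₖ + Eₙ = 0` for `n ≥ 1`. -/
noncomputable def eulerNumber : ℕ → ℚ
  | 0 => 1
  | n + 1 => (-1/2) * ∑ k ∈ (Finset.range (n+1)).attach,
      ((n+1).choose k.1 : ℚ) * eulerNumber k.1
  decreasing_by exact Finset.mem_range.mp k.2

open Finset

lemma euler_rec (n : ℕ) :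
    ∑ k ∈ range (n+1), ((n+1).choose k : ℚ) * eulerNumber k
      = -2 * eulerNumber (n+1) := by
  conv_rhs => rw [eulerNumber]
  rw [← Finset.sum_attach (range (n+1)) (fun k => ((n+1).choose k : ℚ) * eulerNumber k)]
  ring

lemma euler_rec' (N : ℕ) (hN : 0 < N) :
    ∑ l ∈ range (N+1), (N.choose l : ℚ) * eulerNumber l = - eulerNumber N := by
  obtain ⟨n, rfl⟩ := Nat.exists_eq_succ_of_ne_zero hN.ne'
  rw [Finset.sum_range_succ, euler_rec, Nat.choose_self]
  ring

lemma choose_trinom {m l j : ℕ} (h : l + j ≤ m) :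
    m.choose l * (m - l).choose j = m.choose j * (m - j).choose l := by
  have hl : l ≤ m := by omega
  have hj : j ≤ m - l := by omega
  rw [← Nat.choose_symm hl, Nat.choose_mul (n := m) hj]
  congr 1
  rw [show m - l - j = m - j - l by omega, Nat.choose_symm (show l ≤ m - j by omega)]

noncomputable def Qe (m : ℕ) (x : ℚ) : ℚ :=
  ∑ l ∈ range (m+1), (m.choose l : ℚ) * eulerNumber l * x ^ (m - l)

lemma Qe_add_one (m : ℕ) (x : ℚ) : Qe m (x + 1) + Qe m x = 2 * x ^ m := by
  have h1 : Qe m (x + 1)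
      = ∑ j ∈ range (m+1), ∑ l ∈ range (m - j + 1),
          (m.choose j : ℚ) * ((m - j).choose l : ℚ) * eulerNumber l * x ^ j := by
    unfold Qe
    have hc : ∀ l ∈ range (m+1), (m.choose l : ℚ) * eulerNumber l * (x + 1) ^ (m - l)
        = ∑ j ∈ range (m - l + 1),
            (m.choose l : ℚ) * ((m - l).choose j : ℚ) * eulerNumber l * x ^ j := by
      intro l _
      rw [add_pow, Finset.mul_sum]
      refine Finset.sum_congr rfl fun j _ => ?_
      simp only [one_pow]
      ring
    rw [Finset.sum_congr rfl hc]
    rw [Finset.sum_comm' (t' := range (m+1)) (s' := fun j => range (m - j + 1))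
      (by intro l j; simp only [mem_range]; omega)]
    refine Finset.sum_congr rfl fun j hj => Finset.sum_congr rfl fun l hl => ?_
    simp only [mem_range] at hj hl
    have key : (m.choose l : ℚ) * ((m - l).choose j : ℚ)
        = (m.choose j : ℚ) * ((m - j).choose l : ℚ) := by
      exact_mod_cast congrArg (Nat.cast : ℕ → ℚ)
        (choose_trinom (m := m) (l := l) (j := j) (by omega))
    rw [mul_assoc, mul_assoc, ← mul_assoc (m.choose l : ℚ), key]
    ring
  have h2 : Qe m x = ∑ j ∈ range (m+1),
      (m.choose j : ℚ) * eulerNumber (m - j) * x ^ j := by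
    unfold Qe
    rw [← Finset.sum_range_reflect]
    refine Finset.sum_congr rfl fun j hj => ?_
    simp only [mem_range] at hj
    have e1 : m + 1 - 1 - j = m - j := by omega
    have e2 : m - (m - j) = j := by omega
    rw [e1, e2, Nat.choose_symm (by omega : j ≤ m)]
  rw [h1, h2, ← Finset.sum_add_distrib]
  have h3 : ∀ j ∈ range (m+1),
      ((∑ l ∈ range (m - j + 1),
          (m.choose j : ℚ) * ((m - j).choose l : ℚ) * eulerNumber l * x ^ j)
        + (m.choose j : ℚ) * eulerNumber (m - j) * x ^ j)
      = ((∑ l ∈ range (m - j + 1), ((m - j).choose l : ℚ) * eulerNumber l)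
          + eulerNumber (m - j)) * ((m.choose j : ℚ) * x ^ j) := by
    intro j _
    rw [add_mul, Finset.sum_mul]
    congr 1
    · refine Finset.sum_congr rfl fun l _ => ?_
      ring
    · ring
  rw [Finset.sum_congr rfl h3]
  rw [Finset.sum_eq_single_of_mem m (self_mem_range_succ m)]
  · have e0 : eulerNumber 0 = 1 := by rw [eulerNumber]
    rw [Nat.sub_self]
    rw [Finset.sum_range_one]
    simp only [Nat.choose_self, Nat.choose_zero_right, Nat.cast_one, one_mul, e0]
    ring
  · intro j hj hjm
    simp only [mem_range] at hj
    rw [euler_rec' (m - j) (by omega)]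
    simp

lemma telescope (f : ℕ → ℚ) (n : ℕ) :
    ∑ l ∈ range n, (-1 : ℚ) ^ l * (f (l + 1) + f l) = f 0 - (-1 : ℚ) ^ n * f n := by
  induction n with
  | zero => simp
  | succ n ih => rw [Finset.sum_range_succ, ih, pow_succ]; ring

/-- For even positive `n` and positive `m`,
`2 ∑_{l=0}^{n-1} (-1)^l l^m = - ∑_{l=0}^{m-1} C(m,l) E_l n^{m-l}`. -/
theorem alternating_sum_powers_even (n m : ℕ) (hn : 0 < n) (hne : Even n) (hm : 0 < m) :
    2 * ∑ l ∈ Finset.range n, (-1 : ℚ) ^ l * (l : ℚ) ^ m =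
      - ∑ l ∈ Finset.range m, (m.choose l : ℚ) * eulerNumber l * (n : ℚ) ^ (m - l) := by
  have key : 2 * ∑ l ∈ Finset.range n, (-1 : ℚ) ^ l * (l : ℚ) ^ m
      = Qe m 0 - Qe m n := by
    calc 2 * ∑ l ∈ Finset.range n, (-1 : ℚ) ^ l * (l : ℚ) ^ m
        = ∑ l ∈ Finset.range n,
            (-1 : ℚ) ^ l * (Qe m ((l + 1 : ℕ) : ℚ) + Qe m (l : ℚ)) := by
          rw [Finset.mul_sum]
          refine Finset.sum_congr rfl fun l _ => ?_
          have h := Qe_add_one m (l : ℚ)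
          push_cast
          rw [h]
          ring
      _ = Qe m ((0 : ℕ) : ℚ) - (-1 : ℚ) ^ n * Qe m (n : ℚ) :=
          telescope (fun l => Qe m (l : ℚ)) n
      _ = Qe m 0 - Qe m n := by rw [hne.neg_one_pow]; norm_num
  rw [key]
  have hQ0 : Qe m 0 = eulerNumber m := by
    unfold Qe
    rw [Finset.sum_range_succ]
    rw [Finset.sum_eq_zero fun l hl => by
      simp only [mem_range] at hl
      rw [zero_pow (by omega : m - l ≠ 0)]; ring]
    simp
  have hQn : Qe m (n : ℚ) = (∑ l ∈ Finset.range m,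
      (m.choose l : ℚ) * eulerNumber l * (n : ℚ) ^ (m - l)) + eulerNumber m := by
    unfold Qe
    rw [Finset.sum_range_succ]
    simp
  rw [hQ0, hQn]
  ring
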